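/- The map sending a primitive 48th root of unity h and a sign ε ∈ {±1} to the triple (24·(h^2+h^{-2})^{-2}, ε·h^{-3}, -ε·(h^{10}+h^{-10})) ∈ ℂ^3 is injective on the 32 pairs (h, ε). -/

import Mathlib

-- auxiliary: case ε₁ε₂ = 1
lemma aux_case_pos (h₁ h₂ : ℂ) (hp₁ : IsPrimitiveRoot h₁ 48) (h2p : h₂ ^ 48 = 1)
    (h2ne : h₂ ≠ 0)
    (hcube : h₂ ^ 3 = h₁ ^ 3)
    (hten : h₁ ^ 10 + h₁ ^ 38 = h₂ ^ 10 + h₂ ^ 38) : h₁ = h₂ := by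
  have h1p : h₁ ^ 48 = 1 := hp₁.pow_eq_one
  have h1ne : h₁ ≠ 0 := hp₁.ne_zero (by norm_num)
  set w : ℂ := h₂ / h₁ with hw
  have hw2 : h₂ = w * h₁ := by rw [hw]; exact (div_mul_cancel₀ h₂ h1ne).symm
  have hw3 : w ^ 3 = 1 := by rw [hw, div_pow, hcube, div_self (pow_ne_zero _ h1ne)]
  have hfac : (w - 1) * (w ^ 2 + w + 1) = 0 := by linear_combination hw3
  rcases mul_eq_zero.1 hfac with hc | hq
  · have : w = 1 := sub_eq_zero.1 hc
    rw [hw2, this, one_mul]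
  · exfalso
    have hwne : w ≠ 1 := by
      intro h; rw [h] at hq; norm_num at hq
    have G : h₁ ^ 10 + h₁ ^ 38 = w ^ 10 * h₁ ^ 10 + w ^ 38 * h₁ ^ 38 := by
      rw [hten, hw2]; ring
    have e10 : w ^ 10 = w := by
      rw [show (10:ℕ) = 3*3+1 by norm_num, pow_add, pow_mul, hw3, one_pow, pow_one, one_mul]
    have e38 : w ^ 38 = w ^ 2 := by
      rw [show (38:ℕ) = 3*12+2 by norm_num, pow_add, pow_mul, hw3, one_pow, one_mul]
    rw [e10, e38] at G
    have step : (1 - w) * (h₁ ^ 20 - w ^ 2) = 0 := by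
      linear_combination h₁ ^ 10 * G + (w ^ 2 - 1) * h1p + (w - 1) * hq
    have h20 : h₁ ^ 20 = w ^ 2 := by
      have h1w : (1 : ℂ) - w ≠ 0 := sub_ne_zero.2 (Ne.symm hwne)
      have := (mul_eq_zero.1 step).resolve_left h1w
      exact sub_eq_zero.1 this
    have h60 : h₁ ^ 60 = 1 := by
      linear_combination (h₁ ^ 40 + h₁ ^ 20 * w ^ 2 + w ^ 4) * h20 + (w ^ 3 + 1) * hw3
    have h12 : h₁ ^ 12 = 1 := by
      linear_combination h60 - h₁ ^ 12 * h1p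
    exact absurd ((hp₁.pow_eq_one_iff_dvd 12).1 h12) (by norm_num)

lemma aux_case_neg (h₁ h₂ : ℂ) (hp₁ : IsPrimitiveRoot h₁ 48) (h2p : h₂ ^ 48 = 1)
    (h2ne : h₂ ≠ 0)
    (hcube : h₂ ^ 3 = -h₁ ^ 3)
    (hten : h₁ ^ 10 + h₁ ^ 38 = -(h₂ ^ 10 + h₂ ^ 38)) : False := by
  have h1p : h₁ ^ 48 = 1 := hp₁.pow_eq_one
  have h1ne : h₁ ≠ 0 := hp₁.ne_zero (by norm_num)
  set w : ℂ := h₂ / h₁ with hw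
  have hw2 : h₂ = w * h₁ := by rw [hw]; exact (div_mul_cancel₀ h₂ h1ne).symm
  have hw3 : w ^ 3 = -1 := by
    rw [hw, div_pow, hcube, neg_div, div_self (pow_ne_zero _ h1ne)]
  have hfac : (w + 1) * (w ^ 2 - w + 1) = 0 := by linear_combination hw3
  have G : h₁ ^ 10 + h₁ ^ 38 = -(w ^ 10 * h₁ ^ 10 + w ^ 38 * h₁ ^ 38) := by
    rw [hten, hw2]; ring
  rcases mul_eq_zero.1 hfac with hc | hq
  · have hwm : w = -1 := eq_neg_of_add_eq_zero_left hc
    rw [hwm] at G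
    have F : h₁ ^ 10 + h₁ ^ 38 = 0 := by linear_combination (1/2 : ℂ) * G
    have h20 : h₁ ^ 20 = -1 := by linear_combination h₁ ^ 10 * F - h1p
    have h40 : h₁ ^ 40 = 1 := by linear_combination (h₁ ^ 20 - 1) * h20
    exact absurd ((hp₁.pow_eq_one_iff_dvd 40).1 h40) (by norm_num)
  · have hwne : w ≠ 1 := by
      intro h; rw [h] at hq; norm_num at hq
    have e10 : w ^ 10 = -w := by
      rw [show (10:ℕ) = 3*3+1 by norm_num, pow_add, pow_mul, hw3, pow_one]; ring
    have e38 : w ^ 38 = w ^ 2 := by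
      rw [show (38:ℕ) = 3*12+2 by norm_num, pow_add, pow_mul, hw3]; ring
    rw [e10, e38] at G
    have step : (w - 1) * (h₁ ^ 20 + w ^ 2) = 0 := by
      linear_combination -h₁ ^ 10 * G + (1 + w ^ 2) * h1p + (w + 1) * hq
    have h20 : h₁ ^ 20 = -w ^ 2 := by
      have h1w : w - 1 ≠ 0 := sub_ne_zero.2 hwne
      have := (mul_eq_zero.1 step).resolve_left h1w
      exact eq_neg_of_add_eq_zero_left this
    have h60 : h₁ ^ 60 = -1 := by
      linear_combination (h₁ ^ 40 - h₁ ^ 20 * w ^ 2 + w ^ 4) * h20 - (w ^ 3 - 1) * hw3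
    have h12 : h₁ ^ 12 = -1 := by
      linear_combination h60 - h₁ ^ 12 * h1p
    have h24 : h₁ ^ 24 = 1 := by
      linear_combination (h₁ ^ 12 - 1) * h12
    exact absurd ((hp₁.pow_eq_one_iff_dvd 24).1 h24) (by norm_num)

theorem invariants_injective (h₁ h₂ ε₁ ε₂ : ℂ)
    (hp₁ : IsPrimitiveRoot h₁ 48) (hp₂ : IsPrimitiveRoot h₂ 48)
    (hε₁ : ε₁ = 1 ∨ ε₁ = -1) (hε₂ : ε₂ = 1 ∨ ε₂ = -1)
    (hdim : 24 / (h₁ ^ 2 + h₁⁻¹ ^ 2) ^ 2 = 24 / (h₂ ^ 2 + h₂⁻¹ ^ 2) ^ 2)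
    (hanom : ε₁ * h₁⁻¹ ^ 3 = ε₂ * h₂⁻¹ ^ 3)
    (hpsi : -ε₁ * (h₁ ^ 10 + h₁⁻¹ ^ 10) = -ε₂ * (h₂ ^ 10 + h₂⁻¹ ^ 10)) :
    h₁ = h₂ ∧ ε₁ = ε₂ := by
  have h1p : h₁ ^ 48 = 1 := hp₁.pow_eq_one
  have h2p : h₂ ^ 48 = 1 := hp₂.pow_eq_one
  have h1ne : h₁ ≠ 0 := hp₁.ne_zero (by norm_num)
  have h2ne : h₂ ≠ 0 := hp₂.ne_zero (by norm_num)
  have i1 : h₁⁻¹ ^ 3 = h₁ ^ 45 := by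
    rw [inv_pow]
    refine inv_eq_of_mul_eq_one_right ?_
    rw [← pow_add]; norm_num [h1p]
  have i2 : h₂⁻¹ ^ 3 = h₂ ^ 45 := by
    rw [inv_pow]
    refine inv_eq_of_mul_eq_one_right ?_
    rw [← pow_add]; norm_num [h2p]
  have j1 : h₁⁻¹ ^ 10 = h₁ ^ 38 := by
    rw [inv_pow]
    refine inv_eq_of_mul_eq_one_right ?_
    rw [← pow_add]; norm_num [h1p]
  have j2 : h₂⁻¹ ^ 10 = h₂ ^ 38 := by
    rw [inv_pow]
    refine inv_eq_of_mul_eq_one_right ?_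
    rw [← pow_add]; norm_num [h2p]
  rw [i1, i2] at hanom
  rw [j1, j2] at hpsi
  rcases hε₁ with rfl | rfl <;> rcases hε₂ with rfl | rfl
  · refine ⟨?_, rfl⟩
    have hcube : h₂ ^ 3 = h₁ ^ 3 := by
      have : h₂ ^ 3 * (h₁ ^ 45 * h₁ ^ 3) = h₁ ^ 3 * (h₂ ^ 45 * h₂ ^ 3) := by
        linear_combination (h₂ ^ 3 * h₁ ^ 3) * hanom
      rw [← pow_add, ← pow_add] at this
      norm_num [h1p, h2p] at this
      exact this
    have hten : h₁ ^ 10 + h₁ ^ 38 = h₂ ^ 10 + h₂ ^ 38 := by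
      linear_combination -hpsi
    exact aux_case_pos h₁ h₂ hp₁ h2p h2ne hcube hten
  · exfalso
    have hcube : h₂ ^ 3 = -h₁ ^ 3 := by
      have : h₂ ^ 3 * (h₁ ^ 45 * h₁ ^ 3) = -(h₁ ^ 3 * (h₂ ^ 45 * h₂ ^ 3)) := by
        linear_combination (h₂ ^ 3 * h₁ ^ 3) * hanom
      rw [← pow_add, ← pow_add] at this
      norm_num [h1p, h2p] at this
      exact this
    have hten : h₁ ^ 10 + h₁ ^ 38 = -(h₂ ^ 10 + h₂ ^ 38) := by
      linear_combination -hpsi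
    exact aux_case_neg h₁ h₂ hp₁ h2p h2ne hcube hten
  · exfalso
    have hcube : h₂ ^ 3 = -h₁ ^ 3 := by
      have : h₂ ^ 3 * (h₁ ^ 45 * h₁ ^ 3) = -(h₁ ^ 3 * (h₂ ^ 45 * h₂ ^ 3)) := by
        linear_combination -(h₂ ^ 3 * h₁ ^ 3) * hanom
      rw [← pow_add, ← pow_add] at this
      norm_num [h1p, h2p] at this
      exact this
    have hten : h₁ ^ 10 + h₁ ^ 38 = -(h₂ ^ 10 + h₂ ^ 38) := by
      linear_combination hpsi
    exact aux_case_neg h₁ h₂ hp₁ h2p h2ne hcube hten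
  · refine ⟨?_, rfl⟩
    have hcube : h₂ ^ 3 = h₁ ^ 3 := by
      have : h₂ ^ 3 * (h₁ ^ 45 * h₁ ^ 3) = h₁ ^ 3 * (h₂ ^ 45 * h₂ ^ 3) := by
        linear_combination -(h₂ ^ 3 * h₁ ^ 3) * hanom
      rw [← pow_add, ← pow_add] at this
      norm_num [h1p, h2p] at this
      exact this
    have hten : h₁ ^ 10 + h₁ ^ 38 = h₂ ^ 10 + h₂ ^ 38 := by
      linear_combination hpsi
    exact aux_case_pos h₁ h₂ hp₁ h2p h2ne hcube hten
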